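/- Let X be a spherically distributed random vector in ℝ^p with E‖X‖ < ∞, β_0 ∈ ℝ^p nonzero, κ = 1/‖β_0‖, and g' : ℝ → ℝ measurable with g'(β_0ᵀX)·‖X‖ integrable. Then for every u ∈ ℝ, E[g'(β_0ᵀX) X · 1{κ β_0ᵀX ≤ u}] = (β_0/‖β_0‖²) · E[g'(β_0ᵀX) (β_0ᵀX) · 1{κ β_0ᵀX ≤ u}]. -/

import Mathlib

open MeasureTheory

lemma sum_sq_pos' {p : ℕ} {w : Fin p → ℝ} (hw : w ≠ 0) : 0 < ∑ k, w k ^ 2 := by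
  obtain ⟨k, hk⟩ := Function.ne_iff.mp hw
  have h1 : 0 < w k ^ 2 := by
    have : w k ≠ 0 := hk
    positivity
  have h2 : w k ^ 2 ≤ ∑ j, w j ^ 2 :=
    Finset.single_le_sum (fun j _ => sq_nonneg (w j)) (Finset.mem_univ k)
  linarith

noncomputable def house {p : ℕ} (w : Fin p → ℝ) : Matrix (Fin p) (Fin p) ℝ :=
  fun k l => (if k = l then (1:ℝ) else 0) - 2 * w k * w l / (∑ m, w m ^ 2)

lemma house_mulVec {p : ℕ} (w : Fin p → ℝ) (x : Fin p → ℝ) (k : Fin p) :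
    (house w).mulVec x k = x k - 2 * w k * (∑ l, w l * x l) / (∑ m, w m ^ 2) := by
  classical
  simp only [house, Matrix.mulVec, dotProduct, sub_mul, Finset.sum_sub_distrib,
    ite_mul, one_mul, zero_mul, Finset.sum_ite_eq, Finset.mem_univ, if_true]
  congr 1
  have : ∀ l, 2 * w k * w l / (∑ m, w m ^ 2) * x l
      = (2 * w k / (∑ m, w m ^ 2)) * (w l * x l) := fun l => by ring
  simp_rw [this, ← Finset.mul_sum]
  ring

lemma dot_house {p : ℕ} (w v x : Fin p → ℝ) :
    ∑ k, v k * (house w).mulVec x k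
      = ∑ k, v k * x k
        - 2 * (∑ k, v k * w k) * (∑ l, w l * x l) / (∑ m, w m ^ 2) := by
  simp_rw [house_mulVec, mul_sub]
  rw [Finset.sum_sub_distrib]
  congr 1
  have : ∀ k, v k * (2 * w k * (∑ l, w l * x l) / (∑ m, w m ^ 2))
      = (2 * (∑ l, w l * x l) / (∑ m, w m ^ 2)) * (v k * w k) := fun k => by ring
  simp_rw [this, ← Finset.mul_sum]
  ring

lemma house_orth {p : ℕ} (w : Fin p → ℝ) (hw : w ≠ 0) : (house w).transpose * house w = 1 := by
  classical
  have hW : (0:ℝ) < ∑ m, w m ^ 2 := sum_sq_pos' hw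
  have hWne : (∑ m, w m ^ 2) ≠ 0 := hW.ne'
  ext k l
  simp only [Matrix.mul_apply, Matrix.transpose_apply, house, Matrix.one_apply]
  have expand : ∀ m : Fin p,
      ((if m = k then (1:ℝ) else 0) - 2 * w m * w k / (∑ m, w m ^ 2)) *
        ((if m = l then (1:ℝ) else 0) - 2 * w m * w l / (∑ m, w m ^ 2))
      = (if m = k then (if m = l then (1:ℝ) else 0) else 0)
        - (if m = k then 2 * w m * w l / (∑ m, w m ^ 2) else 0)
        - (if m = l then 2 * w m * w k / (∑ m, w m ^ 2) else 0)
        + (4 * w k * w l / (∑ m, w m ^ 2) ^ 2) * w m ^ 2 := by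
    intro m
    split_ifs <;> field_simp <;> ring
  rw [Finset.sum_congr rfl (fun m _ => expand m)]
  rw [Finset.sum_add_distrib, Finset.sum_sub_distrib, Finset.sum_sub_distrib,
    Finset.sum_ite_eq', Finset.sum_ite_eq', Finset.sum_ite_eq', ← Finset.mul_sum]
  simp only [Finset.mem_univ, if_true]
  split_ifs with h
  · subst h; field_simp; ring
  · field_simp; ring

lemma key_zero {Ω : Type*} [m0 : MeasurableSpace Ω] (μ : Measure Ω) [IsProbabilityMeasure μ]
    {p : ℕ} (X : Ω → (Fin p → ℝ)) (β0 w : Fin p → ℝ) (hX : Measurable X)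
    (g' : ℝ → ℝ) (hg' : Measurable g') (κ u : ℝ)
    (hsph : ∀ O : Matrix (Fin p) (Fin p) ℝ, O.transpose * O = 1 →
      Measure.map (fun ω => O.mulVec (X ω)) μ = Measure.map X μ)
    (hw0 : w ≠ 0) (horth : ∑ k, β0 k * w k = 0) :
    ∫ ω, g' (∑ k, β0 k * X ω k) * (∑ k, w k * X ω k)
        * (if κ * ∑ k, β0 k * X ω k ≤ u then (1:ℝ) else 0) ∂μ = 0 := by
  classical
  have hW : (0:ℝ) < ∑ m, w m ^ 2 := sum_sq_pos' hw0
  have hWne : (∑ m, w m ^ 2) ≠ 0 := hW.ne'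
  set F : (Fin p → ℝ) → ℝ := fun x => g' (∑ k, β0 k * x k) * (∑ k, w k * x k)
      * (if κ * ∑ k, β0 k * x k ≤ u then (1:ℝ) else 0) with hFdef
  have hdot : ∀ v : Fin p → ℝ, Measurable (fun x : Fin p → ℝ => ∑ k, v k * x k) :=
    fun v => Finset.measurable_sum _ (fun k _ => (measurable_pi_apply k).const_mul _)
  have hFm : Measurable F := by
    apply Measurable.mul
    · exact (hg'.comp (hdot β0)).mul (hdot w)
    · exact Measurable.ite (measurableSet_le ((hdot β0).const_mul κ) measurable_const)
        measurable_const measurable_const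
  have hOX : Measurable fun ω => (house w).mulVec (X ω) := by
    apply measurable_pi_lambda
    intro k
    simp only [Matrix.mulVec, dotProduct]
    exact Finset.measurable_sum _ fun l _ => ((measurable_pi_apply l).comp hX).const_mul _
  have h1 : ∫ ω, F (X ω) ∂μ = ∫ ω, F ((house w).mulVec (X ω)) ∂μ := by
    rw [← integral_map hX.aemeasurable hFm.aestronglyMeasurable,
      ← hsph (house w) (house_orth w hw0),
      integral_map hOX.aemeasurable hFm.aestronglyMeasurable]
  have h2 : ∀ x : Fin p → ℝ, F ((house w).mulVec x) = - F x := by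
    intro x
    have hb := dot_house w β0 x
    have hwd := dot_house w w x
    rw [horth] at hb
    have hww : ∑ k, w k * w k = ∑ m, w m ^ 2 := by
      apply Finset.sum_congr rfl; intro k _; ring
    rw [hww] at hwd
    have hb' : ∑ k, β0 k * (house w).mulVec x k = ∑ k, β0 k * x k := by
      rw [hb]; ring
    have hwd' : ∑ k, w k * (house w).mulVec x k = - ∑ l, w l * x l := by
      rw [hwd]; field_simp; ring
    simp only [hFdef, hb', hwd']
    ring
  have h3 : ∫ ω, F ((house w).mulVec (X ω)) ∂μ = - ∫ ω, F (X ω) ∂μ := by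
    simp_rw [h2]
    exact integral_neg _
  have : ∫ ω, F (X ω) ∂μ = 0 := by
    have := h1.trans h3
    linarith
  exact this

/-- For a spherically distributed `X`, the vector `M(u) = E[g'(β₀ᵀX) X · 1{κβ₀ᵀX ≤ u}]`
collapses to `(β₀/‖β₀‖²) E[g'(β₀ᵀX)(β₀ᵀX) · 1{κβ₀ᵀX ≤ u}]`, where `κ = 1/‖β₀‖`. -/
theorem stmt_9 {Ω : Type*} [m0 : MeasurableSpace Ω] (μ : Measure Ω) [IsProbabilityMeasure μ]
    (p : ℕ) (X : Ω → (Fin p → ℝ)) (β0 : Fin p → ℝ) (hβ : β0 ≠ 0)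
    (g' : ℝ → ℝ) (hg' : Measurable g') (hX : Measurable X)
    (hint : Integrable (fun ω => |g' (∑ k, β0 k * X ω k)| * Real.sqrt (∑ i, X ω i ^ 2)) μ)
    (hsph : ∀ O : Matrix (Fin p) (Fin p) ℝ, O.transpose * O = 1 →
      Measure.map (fun ω => O.mulVec (X ω)) μ = Measure.map X μ) :
    ∀ u : ℝ, ∀ i : Fin p,
      ∫ ω, g' (∑ k, β0 k * X ω k) * X ω i
          * (if (Real.sqrt (∑ k, β0 k ^ 2))⁻¹ * ∑ k, β0 k * X ω k ≤ u then (1 : ℝ) else 0) ∂μ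
        = β0 i / (∑ k, β0 k ^ 2)
          * ∫ ω, g' (∑ k, β0 k * X ω k) * (∑ k, β0 k * X ω k)
              * (if (Real.sqrt (∑ k, β0 k ^ 2))⁻¹ * ∑ k, β0 k * X ω k ≤ u then (1 : ℝ) else 0) ∂μ := by
  classical
  intro u i
  set B : ℝ := ∑ k, β0 k ^ 2 with hBdef
  have hB : (0:ℝ) < B := sum_sq_pos' hβ
  set κ : ℝ := (Real.sqrt B)⁻¹ with hκdef
  set c : ℝ := β0 i / B with hcdef
  set w : Fin p → ℝ := fun k => (if k = i then (1:ℝ) else 0) - c * β0 k with hwdef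
  set s : Ω → ℝ := fun ω => ∑ k, β0 k * X ω k with hsdef
  set ind : Ω → ℝ := fun ω => if κ * s ω ≤ u then (1:ℝ) else 0 with hinddef
  have hdot : ∀ v : Fin p → ℝ, Measurable (fun x : Fin p → ℝ => ∑ k, v k * x k) :=
    fun v => Finset.measurable_sum _ (fun k _ => (measurable_pi_apply k).const_mul _)
  -- generic integrability
  have int_aux : ∀ v : Fin p → ℝ,
      Integrable (fun ω => g' (s ω) * (∑ k, v k * X ω k) * ind ω) μ := by
    intro v
    have hm : AEStronglyMeasurable (fun ω => g' (s ω) * (∑ k, v k * X ω k) * ind ω) μ := by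
      apply Measurable.aestronglyMeasurable
      apply Measurable.mul
      · exact (hg'.comp ((hdot β0).comp hX)).mul ((hdot v).comp hX)
      · exact Measurable.ite
          (measurableSet_le (((hdot β0).comp hX).const_mul κ) measurable_const)
          measurable_const measurable_const
    apply Integrable.mono (hint.const_mul (∑ k, |v k|)) hm
    filter_upwards with ω
    have habs : |∑ k, v k * X ω k| ≤ (∑ k, |v k|) * Real.sqrt (∑ j, X ω j ^ 2) := by
      calc |∑ k, v k * X ω k| ≤ ∑ k, |v k * X ω k| := Finset.abs_sum_le_sum_abs _ _
        _ ≤ ∑ k, |v k| * Real.sqrt (∑ j, X ω j ^ 2) := by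
            apply Finset.sum_le_sum
            intro k _
            rw [abs_mul]
            apply mul_le_mul_of_nonneg_left _ (abs_nonneg _)
            rw [← Real.sqrt_sq_eq_abs]
            exact Real.sqrt_le_sqrt
              (Finset.single_le_sum (fun j _ => sq_nonneg (X ω j)) (Finset.mem_univ k))
        _ = (∑ k, |v k|) * Real.sqrt (∑ j, X ω j ^ 2) := by rw [Finset.sum_mul]
    have hindle : |ind ω| ≤ 1 := by
      simp only [hinddef]; split_ifs <;> simp
    have hnn : (0:ℝ) ≤ (∑ k, |v k|) := Finset.sum_nonneg fun k _ => abs_nonneg _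
    have hsq : (0:ℝ) ≤ Real.sqrt (∑ j, X ω j ^ 2) := Real.sqrt_nonneg _
    simp only [Real.norm_eq_abs]
    rw [abs_mul, abs_mul]
    rw [abs_of_nonneg (by positivity : (0:ℝ) ≤ (∑ k, |v k|) * (|g' (s ω)| * Real.sqrt (∑ j, X ω j ^ 2)))]
    calc |g' (s ω)| * |∑ k, v k * X ω k| * |ind ω|
        ≤ |g' (s ω)| * ((∑ k, |v k|) * Real.sqrt (∑ j, X ω j ^ 2)) * 1 := by
          apply mul_le_mul
          · exact mul_le_mul_of_nonneg_left habs (abs_nonneg _)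
          · exact hindle
          · exact abs_nonneg _
          · positivity
      _ = (∑ k, |v k|) * (|g' (s ω)| * Real.sqrt (∑ j, X ω j ^ 2)) := by ring
  -- pointwise decomposition
  have hdecomp : ∀ ω, g' (s ω) * X ω i * ind ω
      = g' (s ω) * (∑ k, w k * X ω k) * ind ω + c * (g' (s ω) * s ω * ind ω) := by
    intro ω
    have hw : ∑ k, w k * X ω k = X ω i - c * s ω := by
      simp only [hwdef, sub_mul, ite_mul, one_mul, zero_mul]
      rw [Finset.sum_sub_distrib, Finset.sum_ite_eq', hsdef]
      simp only [Finset.mem_univ, if_true]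
      congr 1
      rw [Finset.mul_sum]
      apply Finset.sum_congr rfl; intro k _; ring
    rw [hw]; ring
  have hfirst : ∫ ω, g' (s ω) * (∑ k, w k * X ω k) * ind ω ∂μ = 0 := by
    by_cases hw0 : w = 0
    · have : ∀ ω, g' (s ω) * (∑ k, w k * X ω k) * ind ω = 0 := by
        intro ω
        rw [hw0]
        simp
      simp_rw [this, integral_zero]
    · apply key_zero μ X β0 w hX g' hg' κ u hsph hw0
      have : ∑ k, β0 k * w k = β0 i - c * B := by
        simp only [hwdef, mul_sub, mul_ite, mul_one, mul_zero]
        rw [Finset.sum_sub_distrib, Finset.sum_ite_eq', hBdef]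
        simp only [Finset.mem_univ, if_true]
        congr 1
        rw [Finset.mul_sum]
        apply Finset.sum_congr rfl; intro k _; ring
      rw [this, hcdef]
      field_simp; ring
  calc ∫ ω, g' (s ω) * X ω i * ind ω ∂μ
      = ∫ ω, (g' (s ω) * (∑ k, w k * X ω k) * ind ω + c * (g' (s ω) * s ω * ind ω)) ∂μ := by
        apply integral_congr_ae
        filter_upwards with ω using hdecomp ω
    _ = (∫ ω, g' (s ω) * (∑ k, w k * X ω k) * ind ω ∂μ)
        + ∫ ω, c * (g' (s ω) * s ω * ind ω) ∂μ := by
        apply integral_add (int_aux w)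
        have := (int_aux β0).const_mul c
        simpa [hsdef] using this
    _ = c * ∫ ω, g' (s ω) * s ω * ind ω ∂μ := by
        rw [hfirst, integral_const_mul]; ring
    _ = β0 i / B * ∫ ω, g' (s ω) * s ω * ind ω ∂μ := by rw [hcdef]
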